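/- Suppose k divides n, write n = lk with l ≥ 2, and let I_1,...,I_l ∈ 𝓘(k;n) be a partition of [n] into k-element blocks. If p_{I_j} < p_c(ℤ^k) for every 1 ≤ j ≤ l (the remaining parameters p_J for J ∉ {I_1,...,I_l} being arbitrary, possibly equal to 1), then in Bernoulli (n,k)-hyperplane percolation the open cluster of the origin in ℤ^n is finite almost surely. -/

import Mathlib

open MeasureTheory ProbabilityTheory
open scoped ENNReal NNReal

namespace BernoulliHyperplane

variable {n : ℕ}

/-- Nearest-neighbor adjacency in `ℤⁿ` (`l¹`-distance one). -/
def latAdj (v w : Fin n → ℤ) : Prop := (∑ i, |v i - w i|) = 1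

/-- Coordinate projection onto the sublattice spanned by the coordinates in `J`. -/
def proj (J : Finset (Fin n)) (v : Fin n → ℤ) : Fin n → ℤ := fun i => if i ∈ J then v i else 0

/-- The open cluster of `x` inside the set of sites `S`, for the openness predicate `good`:
all sites reachable from `x` by nearest-neighbor paths of `good` sites staying in `S`. -/
def clusterIn (S : Set (Fin n → ℤ)) (good : (Fin n → ℤ) → Prop) (x : Fin n → ℤ) :
    Set (Fin n → ℤ) :=
  {v | (x ∈ S ∧ good x) ∧ Relation.ReflTransGen (fun u w => latAdj u w ∧ w ∈ S ∧ good w) x v}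

/-- A site of `ℤⁿ` is open in `(n,k)`-hyperplane percolation iff all its projections onto the
`k`-dimensional coordinate sublattices are open. -/
def hpOpen (k : ℕ) (f : Finset (Fin n) → (Fin n → ℤ) → Bool) (v : Fin n → ℤ) : Prop :=
  ∀ J : Finset (Fin n), J.card = k → f J (proj J v) = true

/-- `(f v)_{v ∈ ℤᵈ}` is an i.i.d. Bernoulli(`p`) random field on `ℤᵈ` under `μ`. -/
def IsBernoulliField (d : ℕ) (p : ℝ) {Ω : Type} [MeasurableSpace Ω] (μ : Measure Ω)
    (f : (Fin d → ℤ) → Ω → Bool) : Prop :=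
  IsProbabilityMeasure μ ∧ (∀ v, Measurable (f v)) ∧
    iIndepFun f μ ∧
    ∀ v, μ {a | f v a = true} = ENNReal.ofReal p

/-- The critical probability of Bernoulli site percolation on `ℤᵈ`: the supremum of the
parameters `p ∈ [0,1]` for which every i.i.d. Bernoulli(`p`) field on `ℤᵈ` has no infinite
open cluster at the origin almost surely. -/
noncomputable def pcSite (d : ℕ) : ℝ :=
  sSup {p : ℝ | p ∈ Set.Icc (0:ℝ) 1 ∧
    ∀ (Ω : Type) (_ : MeasurableSpace Ω) (μ : Measure Ω) (f : (Fin d → ℤ) → Ω → Bool),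
      IsBernoulliField d p μ f →
      μ {a | (clusterIn Set.univ (fun v => f v a = true) 0).Infinite} = 0}

/-- The random fields `(F J v)` (for `J` a `k`-subset of `[n]` and `v` in the sublattice `ℤᵏ_J`)
form independent i.i.d. Bernoulli(`p J`) fields: this is Bernoulli `(n,k)`-hyperplane
percolation with parameter vector `p`. -/
def IsHyperplanePercolation (n k : ℕ) (p : Finset (Fin n) → ℝ) {Ω : Type} [MeasurableSpace Ω]
    (μ : Measure Ω) (F : Finset (Fin n) → (Fin n → ℤ) → Ω → Bool) : Prop :=
  IsProbabilityMeasure μ ∧ (∀ J v, Measurable (F J v)) ∧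
    iIndepFun
      (fun (q : {q : Finset (Fin n) × (Fin n → ℤ) // q.1.card = k ∧ ∀ i ∉ q.1, q.2 i = 0}) a =>
        F q.1.1 q.1.2 a) μ ∧
    ∀ J : Finset (Fin n), J.card = k → ∀ v : Fin n → ℤ, (∀ i ∉ J, v i = 0) →
      μ {a | F J v a = true} = ENNReal.ofReal (p J)

attribute [local instance] ZeroLEOneClass.factZeroLtOne

instance : IsProbabilityMeasure (volume : Measure (AddCircle (1:ℝ))) := by
  constructor; rw [AddCircle.measure_univ]; simp

variable (ι : Type) [Countable ι] [Nonempty ι]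

/-- auxiliary positive compact -/
noncomputable def univPC : TopologicalSpace.PositiveCompacts (ι → AddCircle (1:ℝ)) :=
  ⟨⟨Set.univ, isCompact_univ⟩, by rw [interior_univ]; exact Set.univ_nonempty⟩

/-- iid uniform noise on the product of circles, as Haar measure. -/
noncomputable def noise : Measure (ι → AddCircle (1:ℝ)) :=
  Measure.addHaarMeasure (univPC ι)

instance : IsProbabilityMeasure (noise ι) := by
  constructor
  have := Measure.addHaarMeasure_self (K₀ := univPC ι)
  simpa [noise, univPC] using this

instance : Measure.IsAddLeftInvariant (noise ι) := by
  unfold noise; infer_instance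

theorem noise_cylinder (S : Finset ι) (B : ι → Set (AddCircle (1:ℝ)))
    (hB : ∀ i ∈ S, MeasurableSet (B i)) :
    noise ι (⋂ i ∈ S, (fun x : ι → AddCircle (1:ℝ) => x i) ⁻¹' B i)
      = ∏ i ∈ S, volume (B i) := by
  classical
  let π : (ι → AddCircle (1:ℝ)) → (S → AddCircle (1:ℝ)) := fun x j => x j
  have hπc : Continuous π := continuous_pi fun j => continuous_apply _
  have hπ : Measurable π := hπc.measurable
  haveI : IsProbabilityMeasure (Measure.map π (noise ι)) :=
    Measure.isProbabilityMeasure_map hπ.aemeasurable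
  haveI : Measure.IsAddLeftInvariant (Measure.map π (noise ι)) := by
    constructor
    intro c
    let c' : ι → AddCircle (1:ℝ) := fun i => if h : i ∈ S then c ⟨i, h⟩ else 0
    have hcomm : (fun y => c + y) ∘ π = π ∘ (fun x => c' + x) := by
      funext x; funext j
      simp only [Function.comp_apply, Pi.add_apply, π, c', dif_pos j.2]
    rw [Measure.map_map (continuous_add_left c).measurable hπ, hcomm,
      ← Measure.map_map hπ (continuous_add_left c').measurable,
      map_add_left_eq_self]
  have huniq : Measure.map π (noise ι)
      = Measure.pi fun _ : S => (volume : Measure (AddCircle (1:ℝ))) := by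
    have h := Measure.isAddInvariant_eq_smul_of_compactSpace (Measure.map π (noise ι))
      (Measure.pi fun _ : S => (volume : Measure (AddCircle (1:ℝ))))
    have h1 : ((Measure.addHaarScalarFactor (Measure.map π (noise ι))
        (Measure.pi fun _ : S => (volume : Measure (AddCircle (1:ℝ))))) : ℝ≥0∞) = 1 := by
      have h2 := congrArg (fun m : Measure (S → AddCircle (1:ℝ)) => m Set.univ) h
      simp only [measure_univ, Measure.smul_apply, ENNReal.smul_def, smul_eq_mul, mul_one] at h2
      exact h2.symm
    rw [h, ENNReal.smul_def, h1, one_smul]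
  have hset : (⋂ i ∈ S, (fun x : ι → AddCircle (1:ℝ) => x i) ⁻¹' B i)
      = π ⁻¹' (Set.univ.pi fun j : S => B j) := by
    ext x
    simp only [Set.mem_iInter, Set.mem_preimage, Set.mem_pi, Set.mem_univ, true_implies]
    exact ⟨fun h j => h j j.2, fun h i hi => h ⟨i, hi⟩⟩
  rw [hset, ← Measure.map_apply hπ (MeasurableSet.univ_pi fun j => hB j j.2), huniq,
    Measure.pi_pi]
  exact Finset.prod_coe_sort S fun i => volume (B i)

theorem exists_arc {r : ℝ} (h1 : r ≤ 1) :
    ∃ A : Set (AddCircle (1:ℝ)), MeasurableSet A ∧ volume A = ENNReal.ofReal r := by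
  refine ⟨Metric.closedBall (0 : AddCircle (1:ℝ)) (r/2), measurableSet_closedBall, ?_⟩
  rw [AddCircle.volume_closedBall, show 2*(r/2) = r by ring, min_eq_right h1]


-- ======================= auxiliary lemmas =======================

lemma clusterIn_mono {n : ℕ} {S : Set (Fin n → ℤ)} {g₁ g₂ : (Fin n → ℤ) → Prop}
    (h : ∀ v, g₁ v → g₂ v) {x : Fin n → ℤ} : clusterIn S g₁ x ⊆ clusterIn S g₂ x := by
  rintro v ⟨⟨hx, hg⟩, hrel⟩
  exact ⟨⟨hx, h _ hg⟩, Relation.ReflTransGen.mono (r := fun u w => latAdj u w ∧ w ∈ S ∧ g₁ w)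
    (p := fun u w => latAdj u w ∧ w ∈ S ∧ g₂ w) (fun u w hw => ⟨hw.1, hw.2.1, h _ hw.2.2⟩) x v hrel⟩

/-- The set of which `pcSite` is the supremum. -/
def pcSet (d : ℕ) : Set ℝ :=
  {p : ℝ | p ∈ Set.Icc (0:ℝ) 1 ∧
    ∀ (Ω : Type) (_ : MeasurableSpace Ω) (μ : Measure Ω) (f : (Fin d → ℤ) → Ω → Bool),
      IsBernoulliField d p μ f →
      μ {a | (clusterIn Set.univ (fun v => f v a = true) 0).Infinite} = 0}

lemma pcSite_eq_sSup (d : ℕ) : pcSite d = sSup (pcSet d) := rfl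

lemma zero_mem_pcSet (d : ℕ) : (0:ℝ) ∈ pcSet d := by
  refine ⟨⟨le_refl _, zero_le_one⟩, fun Ω _ μ f hf => ?_⟩
  have h0 : μ {a | f 0 a = true} = 0 := by
    rw [hf.2.2.2 0]; simp
  refine measure_mono_null (fun a ha => ?_) h0
  obtain ⟨v, hv⟩ := Set.Infinite.nonempty ha
  exact hv.1.2

lemma measurable_to_bool {α : Type*} [MeasurableSpace α] {f : α → Bool}
    (h : MeasurableSet (f ⁻¹' {true})) : Measurable f := by
  classical
  intro s _
  have hs : f ⁻¹' s =
      (if true ∈ s then f ⁻¹' {true} else ∅) ∪ (if false ∈ s then (f ⁻¹' {true})ᶜ else ∅) := by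
    ext a
    rcases hfa : f a with _ | _ <;> by_cases h1 : true ∈ s <;> by_cases h2 : false ∈ s <;>
      simp [hfa, h1, h2]
  rw [hs]
  refine MeasurableSet.union ?_ ?_ <;> split <;> simp [h, h.compl]

lemma iIndepFun_comp_right {ι' κ Ω : Type*} {β : Type*} [MeasurableSpace Ω] {m : MeasurableSpace β}
    {μ : Measure Ω} {f : ι' → Ω → β} (hf : iIndepFun (m := fun _ => m) f μ)
    {u : κ → ι'} (hu : Function.Injective u) :
    iIndepFun (m := fun _ => m) (fun j => f (u j)) μ := by
  classical
  rw [iIndepFun_iff_measure_inter_preimage_eq_mul] at hf ⊢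
  intro S sets hsets
  set sets' : ι' → Set β := fun i =>
    if h : ∃ j, j ∈ S ∧ u j = i then sets h.choose else Set.univ with hsets'def
  have key : ∀ j ∈ S, sets' (u j) = sets j := by
    intro j hj
    have hex : ∃ j', j' ∈ S ∧ u j' = u j := ⟨j, hj, rfl⟩
    have hch : hex.choose = j := hu hex.choose_spec.2
    simp only [hsets'def, dif_pos hex, hch]
  have hmeas' : ∀ i ∈ S.image u, MeasurableSet[m] (sets' i) := by
    intro i hi
    rcases Finset.mem_image.1 hi with ⟨j, hj, rfl⟩
    rw [key j hj]; exact hsets j hj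
  have h1 : (⋂ i ∈ S.image u, f i ⁻¹' sets' i) = ⋂ j ∈ S, f (u j) ⁻¹' sets j := by
    ext x
    simp only [Set.mem_iInter, Finset.mem_image]
    constructor
    · intro h j hj
      have := h (u j) ⟨j, hj, rfl⟩
      rwa [key j hj] at this
    · rintro h i ⟨j, hj, rfl⟩
      rw [key j hj]; exact h j hj
  have h2 : (∏ i ∈ S.image u, μ (f i ⁻¹' sets' i)) = ∏ j ∈ S, μ (f (u j) ⁻¹' sets j) := by
    rw [Finset.prod_image (fun x _ y _ h => hu h)]
    exact Finset.prod_congr rfl fun j hj => by rw [key j hj]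
  rw [← h1, ← h2]
  exact hf _ hmeas'

/-- Any Bernoulli field with parameter strictly below `pcSite d` has a.s. no infinite
cluster at the origin. -/
theorem bernoulli_subcritical {d : ℕ} {pr : ℝ} {Ω : Type} [MeasurableSpace Ω] {μ : Measure Ω}
    {f : (Fin d → ℤ) → Ω → Bool} (hf : IsBernoulliField d pr μ f) (hp : pr < pcSite d) :
    μ {a | (clusterIn Set.univ (fun v => f v a = true) 0).Infinite} = 0 := by
  classical
  obtain ⟨hprob, hmeas, hind, hmarg⟩ := hf
  rcases le_or_gt pr 0 with hple | hppos
  · have h0 : μ {a | f 0 a = true} = 0 := by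
      rw [hmarg 0]; exact ENNReal.ofReal_eq_zero.2 hple
    refine measure_mono_null (fun a ha => ?_) h0
    obtain ⟨v, hv⟩ := Set.Infinite.nonempty ha
    exact hv.1.2
  rw [pcSite_eq_sSup] at hp
  obtain ⟨q, hqmem, hpq⟩ := exists_lt_of_lt_csSup ⟨0, zero_mem_pcSet d⟩ hp
  obtain ⟨⟨hq0, hq1⟩, hqprop⟩ := hqmem
  have hpr1 : pr < 1 := lt_of_lt_of_le hpq hq1
  have h1pr : (0:ℝ) < 1 - pr := by linarith
  set r : ℝ := (q - pr) / (1 - pr) with hrdef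
  have hr1 : r ≤ 1 := by rw [hrdef, div_le_one h1pr]; linarith
  have hr0 : 0 ≤ r := div_nonneg (by linarith) h1pr.le
  obtain ⟨A, hA, hvolA⟩ := exists_arc hr1
  haveI : IsProbabilityMeasure μ := hprob
  set ν := noise (Fin d → ℤ) with hν
  set μ' := μ.prod ν with hμ'
  haveI : IsProbabilityMeasure μ' := by rw [hμ']; infer_instance
  set g : (Fin d → ℤ) → Ω × ((Fin d → ℤ) → AddCircle (1:ℝ)) → Bool :=
    fun v ω => f v ω.1 || decide (ω.2 v ∈ A) with hgdef
  have hνeval : ∀ (v : Fin d → ℤ) (B : Set (AddCircle (1:ℝ))), MeasurableSet B →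
      ν ((fun x : (Fin d → ℤ) → AddCircle (1:ℝ) => x v) ⁻¹' B) = volume B := by
    intro v B hB
    have := noise_cylinder (Fin d → ℤ) {v} (fun _ => B) (fun _ _ => hB)
    simpa using this
  -- measurability of g
  have hgmeas : ∀ v, Measurable (g v) := by
    intro v
    apply measurable_to_bool
    have : g v ⁻¹' {true}
        = (Prod.fst ⁻¹' (f v ⁻¹' {true}))
          ∪ (Prod.snd ⁻¹' ((fun x : (Fin d → ℤ) → AddCircle (1:ℝ) => x v) ⁻¹' A)) := by
      ext ω
      by_cases hb : f v ω.1 = true <;> simp [hgdef, hb]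
    rw [this]
    exact (measurable_fst (hmeas v (measurableSet_singleton true))).union
      (measurable_snd ((measurable_pi_apply v) hA))
  -- independence of the pair family
  set Φ : (Fin d → ℤ) → Ω × ((Fin d → ℤ) → AddCircle (1:ℝ)) → Bool × AddCircle (1:ℝ) :=
    fun v ω => (f v ω.1, ω.2 v) with hΦdef
  have hΦmeas : ∀ v, Measurable (Φ v) := fun v =>
    ((hmeas v).comp measurable_fst).prodMk ((measurable_pi_apply v).comp measurable_snd)
  set πs : (Fin d → ℤ) → Set (Set (Ω × ((Fin d → ℤ) → AddCircle (1:ℝ)))) :=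
    fun v => Set.preimage (Φ v) '' (Set.image2 (· ×ˢ ·)
      {s : Set Bool | MeasurableSet s} {t : Set (AddCircle (1:ℝ)) | MeasurableSet t}) with hπsdef
  have hΦ : iIndepFun Φ μ' := by
    rw [iIndepFun_iff_iIndep]
    refine iIndepSets.iIndep (fun v => (hΦmeas v).comap_le) πs
      (fun v => isPiSystem_prod.comap (Φ v)) (fun v => ?_) ?_
    · rw [← generateFrom_prod, MeasurableSpace.comap_generateFrom]
    · rw [iIndepSets_iff]
      intro S sets hsets
      have hchoice : ∀ v ∈ S, ∃ B1 : Set Bool, ∃ B2 : Set (AddCircle (1:ℝ)),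
          MeasurableSet B1 ∧ MeasurableSet B2 ∧
          sets v = (f v ⁻¹' B1) ×ˢ ((fun x : (Fin d → ℤ) → AddCircle (1:ℝ) => x v) ⁻¹' B2) := by
        intro v hv
        rcases hsets v hv with ⟨t, ht, hteq⟩
        rcases ht with ⟨B1, hB1, B2, hB2, rfl⟩
        refine ⟨B1, B2, hB1, hB2, ?_⟩
        rw [← hteq]
        ext ω
        simp [hΦdef, Set.mem_prod]
      choose! B1 B2 hmB1 hmB2 hsetseq using hchoice
      rcases S.eq_empty_or_nonempty with rfl | hSne
      · simp
      · have hsplit : (⋂ v ∈ S, sets v)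
            = ((⋂ v ∈ S, f v ⁻¹' B1 v) ×ˢ
               (⋂ v ∈ S, (fun x : (Fin d → ℤ) → AddCircle (1:ℝ) => x v) ⁻¹' B2 v)) := by
          ext ω
          simp only [Set.mem_iInter, Set.mem_prod]
          constructor
          · intro h
            constructor
            · intro v hv
              have := h v hv; rw [hsetseq v hv] at this; exact this.1
            · intro v hv
              have := h v hv; rw [hsetseq v hv] at this; exact this.2
          · intro h v hv
            rw [hsetseq v hv]; exact ⟨h.1 v hv, h.2 v hv⟩
        have hfint : μ (⋂ v ∈ S, f v ⁻¹' B1 v) = ∏ v ∈ S, μ (f v ⁻¹' B1 v) :=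
          hind.meas_biInter (fun v hv => ⟨B1 v, hmB1 v hv, rfl⟩)
        have hνint : ν (⋂ v ∈ S, (fun x : (Fin d → ℤ) → AddCircle (1:ℝ) => x v) ⁻¹' B2 v)
            = ∏ v ∈ S, volume (B2 v) :=
          noise_cylinder (Fin d → ℤ) S B2 hmB2
        rw [hsplit, Measure.prod_prod, hfint, hνint, ← Finset.prod_mul_distrib]
        refine Finset.prod_congr rfl fun v hv => ?_
        rw [hsetseq v hv, Measure.prod_prod, hνeval v (B2 v) (hmB2 v hv)]
  -- independence of g
  have hgind : iIndepFun g μ' := by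
    have hφor : ∀ _v : Fin d → ℤ,
        Measurable (fun bc : Bool × AddCircle (1:ℝ) => bc.1 || decide (bc.2 ∈ A)) := by
      intro v
      apply measurable_to_bool
      have : (fun bc : Bool × AddCircle (1:ℝ) => bc.1 || decide (bc.2 ∈ A)) ⁻¹' {true}
          = (Prod.fst ⁻¹' ({true} : Set Bool)) ∪ (Prod.snd ⁻¹' A) := by
        ext bc
        by_cases hb : bc.1 = true <;> simp [hb]
      rw [this]
      exact (measurable_fst (measurableSet_singleton true)).union (measurable_snd hA)
    exact hΦ.comp _ hφor
  -- marginals of g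
  have hgmarg : ∀ v, μ' {ω | g v ω = true} = ENNReal.ofReal q := by
    intro v
    have hT : MeasurableSet (f v ⁻¹' {true}) := hmeas v (measurableSet_singleton true)
    have hset2 : {ω : Ω × ((Fin d → ℤ) → AddCircle (1:ℝ)) | g v ω = true}
        = ((f v ⁻¹' {true}) ×ˢ (Set.univ : Set ((Fin d → ℤ) → AddCircle (1:ℝ))))
          ∪ (((f v ⁻¹' {true})ᶜ) ×ˢ ((fun x : (Fin d → ℤ) → AddCircle (1:ℝ) => x v) ⁻¹' A)) := by
      ext ω
      by_cases hb : f v ω.1 = true <;> simp [hgdef, hb]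
    have hdisj : Disjoint ((f v ⁻¹' {true}) ×ˢ (Set.univ : Set ((Fin d → ℤ) → AddCircle (1:ℝ))))
        (((f v ⁻¹' {true})ᶜ) ×ˢ ((fun x : (Fin d → ℤ) → AddCircle (1:ℝ) => x v) ⁻¹' A)) := by
      rw [Set.disjoint_left]
      rintro ω ⟨h1, -⟩ ⟨h2, -⟩
      exact h2 h1
    have hmeas2 : MeasurableSet (((f v ⁻¹' {true})ᶜ)
        ×ˢ ((fun x : (Fin d → ℤ) → AddCircle (1:ℝ) => x v) ⁻¹' A)) :=
      (hT.compl).prod ((measurable_pi_apply v) hA)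
    have hqr : pr + (1 - pr) * r = q := by
      rw [hrdef]; field_simp; ring
    have hpre : μ (f v ⁻¹' {true}) = ENNReal.ofReal pr := hmarg v
    rw [hset2, measure_union hdisj hmeas2, hμ', Measure.prod_prod, Measure.prod_prod,
      measure_univ, mul_one, measure_compl hT (measure_ne_top _ _), measure_univ,
      hνeval v A hA, hvolA, hpre,
      show (1:ℝ≥0∞) - ENNReal.ofReal pr = ENNReal.ofReal (1 - pr) by
        rw [ENNReal.ofReal_sub 1 hppos.le, ENNReal.ofReal_one],
      ← ENNReal.ofReal_mul h1pr.le,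
      ← ENNReal.ofReal_add hppos.le (mul_nonneg h1pr.le hr0), hqr]
  -- g is a Bernoulli(q) field; apply the defining property of q
  have hBq : IsBernoulliField d q μ' g := ⟨inferInstance, hgmeas, hgind, hgmarg⟩
  have hZ : μ' {ω : Ω × ((Fin d → ℤ) → AddCircle (1:ℝ)) |
      (clusterIn Set.univ (fun v => g v ω = true) 0).Infinite} = 0 :=
    hqprop _ inferInstance μ' g hBq
  obtain ⟨N, hZN, hNmeas, hN0⟩ := exists_measurable_superset_of_null hZ
  rw [hμ'] at hN0
  have hae := (Measure.measure_prod_null hNmeas).1 hN0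
  have hnull : μ {a | ν (Prod.mk a ⁻¹' N) ≠ 0} = 0 := by
    rw [Filter.EventuallyEq, ae_iff] at hae
    simpa using hae
  refine measure_mono_null (fun a ha => ?_) hnull
  have hsect : (Set.univ : Set ((Fin d → ℤ) → AddCircle (1:ℝ))) ⊆ Prod.mk a ⁻¹' N := by
    intro x _
    apply hZN
    have hmono := clusterIn_mono (S := Set.univ)
      (g₁ := fun v => f v a = true) (g₂ := fun v => g v (a, x) = true)
      (fun v hv => by simp [hgdef, hv]) (x := 0)
    exact Set.Infinite.mono hmono ha
  simp only [Set.mem_setOf_eq]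
  intro h0
  have hle : (1:ℝ≥0∞) ≤ ν (Prod.mk a ⁻¹' N) := by
    simpa using measure_mono (μ := ν) hsect
  rw [h0] at hle
  simp at hle

-- ======================= block structure =======================

lemma proj_idem {n : ℕ} (J : Finset (Fin n)) (u : Fin n → ℤ) :
    proj J (proj J u) = proj J u := by
  funext i; by_cases h : i ∈ J <;> simp [proj, h]

/-- extension of a `ℤᵏ` configuration to `ℤⁿ`, supported on a `k`-element block. -/
noncomputable def blockExt {n k : ℕ} (J : Finset (Fin n)) (hJ : J.card = k)
    (u : Fin k → ℤ) : Fin n → ℤ :=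
  fun i => if h : i ∈ J then u (Finset.equivFinOfCardEq hJ ⟨i, h⟩) else 0

/-- restriction of a `ℤⁿ` configuration to a `k`-element block. -/
noncomputable def blockEmb {n k : ℕ} (J : Finset (Fin n)) (hJ : J.card = k)
    (u : Fin n → ℤ) : Fin k → ℤ :=
  fun i' => u ((Finset.equivFinOfCardEq hJ).symm i')

lemma blockExt_not_mem {n k : ℕ} {J : Finset (Fin n)} {hJ : J.card = k} {u : Fin k → ℤ}
    {i : Fin n} (hi : i ∉ J) : blockExt J hJ u i = 0 := dif_neg hi

lemma blockExt_emb {n k : ℕ} (J : Finset (Fin n)) (hJ : J.card = k) (u : Fin n → ℤ) :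
    blockExt J hJ (blockEmb J hJ u) = proj J u := by
  funext i; by_cases h : i ∈ J
  · simp [blockExt, blockEmb, proj, h]
  · simp [blockExt, proj, h]

lemma blockEmb_proj {n k : ℕ} (J : Finset (Fin n)) (hJ : J.card = k) (u : Fin n → ℤ) :
    blockEmb J hJ (proj J u) = blockEmb J hJ u := by
  funext i'
  simp [blockEmb, proj, Finset.coe_mem]


/-- if `k` divides `n = l·k` with `l ≥ 2` and `[n]` is partitioned into `l`
blocks `P 0, …, P (l-1)` of size `k` with `p_{P j} < p_c(ℤᵏ)` for every `j` (the remaining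
parameters being arbitrary), then the open cluster of the origin is finite almost surely. -/
theorem subcritical_partition (n k l : ℕ) (hk2 : 2 ≤ k) (hl : 2 ≤ l) (hn : n = l * k)
    (P : Fin l → Finset (Fin n)) (hcard : ∀ j, (P j).card = k)
    (hdisj : ∀ i j, i ≠ j → Disjoint (P i) (P j))
    (hcover : ∀ i : Fin n, ∃ j, i ∈ P j)
    (p : Finset (Fin n) → ℝ) (Ω : Type) [MeasurableSpace Ω] (μ : Measure Ω)
    (F : Finset (Fin n) → (Fin n → ℤ) → Ω → Bool)
    (hperc : IsHyperplanePercolation n k p μ F)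
    (hsub : ∀ j, p (P j) < pcSite k) :
    μ {a | (clusterIn Set.univ (hpOpen k (fun J v => F J v a)) 0).Finite} = 1 := by
  classical
  obtain ⟨hprob, hFmeas, hFind, hFmarg⟩ := hperc
  haveI : IsProbabilityMeasure μ := hprob
  set g : Fin l → (Fin k → ℤ) → Ω → Bool :=
    fun j v a => F (P j) (blockExt (P j) (hcard j) v) a with hgdef
  have hBF : ∀ j, IsBernoulliField k (p (P j)) μ (g j) := by
    intro j
    refine ⟨hprob, fun v => hFmeas _ _, ?_, ?_⟩
    · have hinj : Function.Injective (fun v : Fin k → ℤ =>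
          (⟨((P j), blockExt (P j) (hcard j) v), hcard j,
            fun i hi => blockExt_not_mem hi⟩ :
            {q : Finset (Fin n) × (Fin n → ℤ) // q.1.card = k ∧ ∀ i ∉ q.1, q.2 i = 0})) := by
        intro v w h
        have h2 : blockExt (P j) (hcard j) v = blockExt (P j) (hcard j) w := by
          have := congrArg (fun z : {q : Finset (Fin n) × (Fin n → ℤ) //
            q.1.card = k ∧ ∀ i ∉ q.1, q.2 i = 0} => z.1.2) h
          exact this
        funext i'
        have h3 := congrFun h2
          (((Finset.equivFinOfCardEq (hcard j)).symm i' : P j) : Fin n)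
        simpa [blockExt, Finset.coe_mem, Subtype.coe_eta] using h3
      exact iIndepFun_comp_right hFind hinj
    · intro v
      exact hFmarg (P j) (hcard j) _ (fun i hi => blockExt_not_mem hi)
  have hsubset : {a : Ω | ¬ (clusterIn Set.univ (hpOpen k (fun J v => F J v a)) 0).Finite}
      ⊆ ⋃ j : Fin l,
        {a : Ω | (clusterIn Set.univ (fun w => g j w a = true) 0).Infinite} := by
    intro a ha
    simp only [Set.mem_setOf_eq] at ha
    set C := clusterIn Set.univ (hpOpen k (fun J v => F J v a)) 0 with hC
    have hCinf : C.Infinite := ha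
    have hproj : ∃ j, ((proj (P j)) '' C).Infinite := by
      by_contra hcon
      push_neg at hcon
      apply hCinf
      have hfin : (Set.univ.pi fun j : Fin l => (proj (P j)) '' C).Finite :=
        Set.Finite.pi fun j => hcon j
      have hinj : Set.InjOn (fun v (j : Fin l) => proj (P j) v) C := by
        intro v _ w _ hvw
        funext i
        obtain ⟨j, hj⟩ := hcover i
        have h5 := congrFun (congrFun hvw j) i
        simpa [proj, hj] using h5
      have himg : (fun v (j : Fin l) => proj (P j) v) '' C
          ⊆ Set.univ.pi fun j : Fin l => (proj (P j)) '' C := by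
        rintro _ ⟨v, hv, rfl⟩ j _
        exact ⟨v, hv, rfl⟩
      exact Set.Finite.of_finite_image (hfin.subset himg) hinj
    obtain ⟨j, hjinf⟩ := hproj
    refine Set.mem_iUnion.2 ⟨j, ?_⟩
    have hinj2 : Set.InjOn (blockEmb (P j) (hcard j)) ((proj (P j)) '' C) := by
      rintro x ⟨v, -, rfl⟩ y ⟨w, -, rfl⟩ hxy
      have h9 : blockExt (P j) (hcard j) (blockEmb (P j) (hcard j) (proj (P j) v))
           = blockExt (P j) (hcard j) (blockEmb (P j) (hcard j) (proj (P j) w)) := by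
        rw [hxy]
      rwa [blockExt_emb, blockExt_emb, proj_idem, proj_idem] at h9
    have hinf2 : ((blockEmb (P j) (hcard j)) '' ((proj (P j)) '' C)).Infinite :=
      fun hfin => hjinf (Set.Finite.of_finite_image hfin hinj2)
    refine Set.Infinite.mono ?_ hinf2
    rintro _ ⟨_, ⟨v, hv, rfl⟩, rfl⟩
    rw [blockEmb_proj]
    obtain ⟨⟨-, h0⟩, hrel⟩ := hv
    have hg0 : ∀ u : Fin n → ℤ, hpOpen k (fun J v => F J v a) u →
        g j (blockEmb (P j) (hcard j) u) a = true := by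
      intro u hu
      have h6 := hu (P j) (hcard j)
      simp only [hgdef]
      rw [blockExt_emb]
      exact h6
    have hadjcase : ∀ u w : Fin n → ℤ, latAdj u w →
        blockEmb (P j) (hcard j) u = blockEmb (P j) (hcard j) w ∨
        latAdj (blockEmb (P j) (hcard j) u) (blockEmb (P j) (hcard j) w) := by
      intro u w huw
      have hsum : (∑ i' : Fin k,
            |blockEmb (P j) (hcard j) u i' - blockEmb (P j) (hcard j) w i'|)
          = ∑ i ∈ P j, |u i - w i| := by
        calc (∑ i' : Fin k, |blockEmb (P j) (hcard j) u i' - blockEmb (P j) (hcard j) w i'|)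
            = ∑ i' : Fin k, (fun x : P j => |u x - w x|)
                ((Finset.equivFinOfCardEq (hcard j)).symm i') := rfl
          _ = ∑ x : P j, |u (x : Fin n) - w (x : Fin n)| :=
              Equiv.sum_comp (Finset.equivFinOfCardEq (hcard j)).symm
                (fun x : P j => |u (x : Fin n) - w (x : Fin n)|)
          _ = ∑ i ∈ P j, |u i - w i| := Finset.sum_coe_sort (P j) (fun i => |u i - w i|)
      have hle : (∑ i ∈ P j, |u i - w i|) ≤ ∑ i : Fin n, |u i - w i| :=
        Finset.sum_le_sum_of_subset_of_nonneg (Finset.subset_univ _)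
          (fun i _ _ => abs_nonneg _)
      have hnn : (0:ℤ) ≤ ∑ i ∈ P j, |u i - w i| :=
        Finset.sum_nonneg fun i _ => abs_nonneg _
      have htot : (∑ i : Fin n, |u i - w i|) = 1 := huw
      have h01 : (∑ i ∈ P j, |u i - w i|) = 0 ∨ (∑ i ∈ P j, |u i - w i|) = 1 := by omega
      rcases h01 with h | h
      · left
        funext i'
        have hz := (Finset.sum_eq_zero_iff_of_nonneg (fun i _ => abs_nonneg _)).1 h
        have h7 := hz (((Finset.equivFinOfCardEq (hcard j)).symm i' : P j) : Fin n)
          (Finset.coe_mem _)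
        have h8 := sub_eq_zero.1 (abs_eq_zero.1 h7)
        simpa [blockEmb] using h8
      · right
        exact hsum.trans h
    induction hrel with
    | refl =>
      exact ⟨⟨Set.mem_univ _, hg0 0 h0⟩, Relation.ReflTransGen.refl⟩
    | tail hab hbc ih =>
      obtain ⟨hadj, -, hopen⟩ := hbc
      rcases hadjcase _ _ hadj with heq | hadj'
      · rw [← heq]; exact ih
      · exact ⟨ih.1, ih.2.tail ⟨hadj', Set.mem_univ _, hg0 _ hopen⟩⟩
  have hnull : μ (⋃ j : Fin l,
      {a : Ω | (clusterIn Set.univ (fun w => g j w a = true) 0).Infinite}) = 0 :=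
    measure_iUnion_null fun j => bernoulli_subcritical (hBF j) (hsub j)
  have hcompl : μ {a : Ω | ¬ (clusterIn Set.univ (hpOpen k (fun J v => F J v a)) 0).Finite} = 0 :=
    measure_mono_null hsubset hnull
  have hunion : {a : Ω | (clusterIn Set.univ (hpOpen k (fun J v => F J v a)) 0).Finite}
      ∪ {a : Ω | ¬ (clusterIn Set.univ (hpOpen k (fun J v => F J v a)) 0).Finite}
      = Set.univ := by
    ext a
    by_cases h : (clusterIn Set.univ (hpOpen k (fun J v => F J v a)) 0).Finite <;> simp [h] <;> exact h
  have hge : (1:ℝ≥0∞) ≤ μ {a | (clusterIn Set.univ (hpOpen k (fun J v => F J v a)) 0).Finite} := by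
    have h8 := measure_union_le (μ := μ)
      {a : Ω | (clusterIn Set.univ (hpOpen k (fun J v => F J v a)) 0).Finite}
      {a : Ω | ¬ (clusterIn Set.univ (hpOpen k (fun J v => F J v a)) 0).Finite}
    rw [hunion, measure_univ, hcompl, add_zero] at h8
    exact h8
  exact le_antisymm prob_le_one hge

end BernoulliHyperplane
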